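/- Let (ε_ℓ)_{ℓ≥1} be independent identically distributed exponential random variables with rate 1. Then the random variable W = exp(-Σ_{ℓ=1}^{∞} ε_ℓ/ℓ²) has s-th moment E[W^s] = π√s/sinh(π√s) for every positive integer s. -/

import Mathlib

open MeasureTheory ProbabilityTheory Real Set Filter
open scoped Topology ENNReal


lemma integral_exp_neg_sub_Ioi {b : ℝ} (hb : 0 < b) :
    ∫ x in Ioi (0:ℝ), Real.exp (-b * x) = b⁻¹ := by
  have := integral_comp_mul_left_Ioi (fun u => Real.exp (-u)) 0 hb
  simp only [mul_zero, smul_eq_mul, neg_mul] at this ⊢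
  rw [this, integral_exp_neg_Ioi_zero, mul_one]

lemma lintegral_exp_expMeasure {t : ℝ} (ht : t < 1) :
    ∫⁻ x, ENNReal.ofReal (Real.exp (t * x)) ∂(expMeasure 1) = ENNReal.ofReal ((1 - t)⁻¹) := by
  have hb : 0 < 1 - t := by linarith
  rw [expMeasure, gammaMeasure,
    lintegral_withDensity_eq_lintegral_mul _
      (show Measurable (gammaPDF 1 1) from (measurable_gammaPDFReal 1 1).ennreal_ofReal)
      (by fun_prop)]
  have hpt : ∀ x : ℝ, (gammaPDF 1 1 * fun x => ENNReal.ofReal (Real.exp (t * x))) x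
      = (Ici (0:ℝ)).indicator (fun x => ENNReal.ofReal (Real.exp (-(1 - t) * x))) x := by
    intro x
    simp only [Pi.mul_apply, gammaPDF, gammaPDFReal, indicator]
    by_cases hx : 0 ≤ x
    · rw [if_pos hx, if_pos (mem_Ici.mpr hx), ← ENNReal.ofReal_mul (by positivity)]
      congr 1
      rw [sub_self, Real.rpow_zero, Real.Gamma_one]
      simp only [one_pow, div_one, one_mul, mul_one, ← Real.exp_add]
      ring_nf
      rw [← Real.exp_add]
    · simp [hx, mem_Ici]
  simp_rw [hpt]
  rw [lintegral_indicator measurableSet_Ici _,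
    setLIntegral_congr (Ioi_ae_eq_Ici (a := (0:ℝ))).symm]
  rw [← ofReal_integral_eq_lintegral_ofReal (exp_neg_integrableOn_Ioi 0 hb)
      (ae_of_all _ fun x => (Real.exp_pos _).le)]
  rw [integral_exp_neg_sub_Ioi hb]

lemma integral_exp_expMeasure {t : ℝ} (ht : t < 1) :
    ∫ x, Real.exp (t * x) ∂(expMeasure 1) = (1 - t)⁻¹ := by
  have hb : 0 < 1 - t := by linarith
  rw [integral_eq_lintegral_of_nonneg_ae (ae_of_all _ fun x => (Real.exp_pos _).le)
      ((Real.measurable_exp.comp (measurable_id'.const_mul t)).aestronglyMeasurable), lintegral_exp_expMeasure ht, ENNReal.toReal_ofReal (by positivity)]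

lemma lintegral_id_expMeasure_le :
    ∫⁻ x, ENNReal.ofReal x ∂(expMeasure 1) ≤ 4 := by
  have hmono : ∀ x : ℝ, ENNReal.ofReal x ≤ ENNReal.ofReal 2 * ENNReal.ofReal (Real.exp (2⁻¹ * x)) := by
    intro x
    rw [← ENNReal.ofReal_mul (by norm_num)]
    apply ENNReal.ofReal_le_ofReal
    have := Real.add_one_le_exp (2⁻¹ * x)
    nlinarith [Real.exp_pos (2⁻¹ * x)]
  calc ∫⁻ x, ENNReal.ofReal x ∂(expMeasure 1)
      ≤ ∫⁻ x, ENNReal.ofReal 2 * ENNReal.ofReal (Real.exp (2⁻¹ * x)) ∂(expMeasure 1) :=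
        lintegral_mono hmono
    _ = ENNReal.ofReal 2 * ENNReal.ofReal ((1 - 2⁻¹)⁻¹) := by
        rw [lintegral_const_mul _ (by fun_prop), lintegral_exp_expMeasure (by norm_num)]
    _ ≤ 4 := by
        rw [← ENNReal.ofReal_mul (by norm_num)]
        norm_num


lemma tendsto_prod_euler (s : ℕ) (hs : 1 ≤ s) :
    Tendsto (fun n => ∏ l ∈ Finset.range n, ((1:ℝ) + (s:ℝ)/((l:ℝ)+1)^2)⁻¹) atTop
      (𝓝 (Real.pi * Real.sqrt s / Real.sinh (Real.pi * Real.sqrt s))) := by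
  set x : ℝ := Real.sqrt s with hxdef
  have hx : 0 < x := Real.sqrt_pos.mpr (by positivity)
  have hxs : (x:ℝ)^2 = (s:ℝ) := Real.sq_sqrt (by positivity)
  set c : ℂ := ↑Real.pi * ((x:ℂ) * Complex.I) with hcdef
  have hC := Complex.tendsto_euler_sin_prod ((x:ℂ) * Complex.I)
  have hz2 : ((x:ℂ) * Complex.I)^2 = -(s:ℂ) := by
    rw [mul_pow, Complex.I_sq,
      show ((x:ℂ))^2 = ((s:ℕ):ℂ) by rw [← Complex.ofReal_pow, hxs]; push_cast; ring]
    ring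
  have hsin : Complex.sin (↑Real.pi * ((x:ℂ) * Complex.I))
      = (Real.sinh (Real.pi * x) : ℂ) * Complex.I := by
    rw [show (↑Real.pi * ((x:ℂ) * Complex.I)) = ((Real.pi * x : ℝ) : ℂ) * Complex.I by
      push_cast; ring, Complex.sin_mul_I, Complex.ofReal_sinh]
  rw [hsin] at hC
  simp only [hz2] at hC
  have hc0 : c ≠ 0 := by
    simp [hcdef, Complex.I_ne_zero, Real.pi_ne_zero, ne_of_gt hx, Real.sqrt_eq_zero']
  have hA : 0 < Real.sinh (Real.pi * x) / (Real.pi * x) := by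
    apply div_pos (Real.sinh_pos_iff.mpr (by positivity)) (by positivity)
  have hC2 : Tendsto (fun n : ℕ => ∏ j ∈ Finset.range n, ((1:ℂ) - -(s:ℂ) / ((j:ℂ) + 1)^2)) atTop
      (𝓝 (((Real.sinh (Real.pi * x) / (Real.pi * x) : ℝ) : ℂ))) := by
    have h1 := hC.const_mul c⁻¹
    have h2 : ∀ n : ℕ, c⁻¹ * (c * ∏ j ∈ Finset.range n, ((1:ℂ) - -(s:ℂ) / ((j:ℂ) + 1)^2))
        = ∏ j ∈ Finset.range n, ((1:ℂ) - -(s:ℂ) / ((j:ℂ) + 1)^2) := fun n =>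
      inv_mul_cancel_left₀ hc0 _
    have h3 : c⁻¹ * ((Real.sinh (Real.pi * x) : ℂ) * Complex.I)
        = ((Real.sinh (Real.pi * x) / (Real.pi * x) : ℝ) : ℂ) := by
      rw [hcdef]
      push_cast
      field_simp [Complex.I_ne_zero, Real.pi_ne_zero, ne_of_gt hx]
    rw [← h3]
    exact (Tendsto.congr h2 h1)
  -- pass to the real parts
  have hR : Tendsto (fun n : ℕ => ∏ l ∈ Finset.range n, ((1:ℝ) + (s:ℝ)/((l:ℝ)+1)^2)) atTop
      (𝓝 (Real.sinh (Real.pi * x) / (Real.pi * x))) := by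
    have := (Complex.continuous_re.tendsto _).comp hC2
    simp only [Function.comp_def, Complex.ofReal_re] at this
    convert this using 2 with n
    rw [show ∀ n : ℕ, (∏ j ∈ Finset.range n, ((1:ℂ) - -(s:ℂ) / ((j:ℂ) + 1)^2))
        = ((∏ l ∈ Finset.range n, ((1:ℝ) + (s:ℝ)/((l:ℝ)+1)^2) : ℝ) : ℂ) from fun n => by
      push_cast; exact Finset.prod_congr rfl fun j _ => by ring, Complex.ofReal_re]
  have hfin := hR.inv₀ (ne_of_gt hA)
  rw [inv_div] at hfin
  convert hfin using 2 with n
  rw [← Finset.prod_inv_distrib]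

/-- Moments of `W = exp(-∑_{ℓ≥1} ε_ℓ/ℓ²)` for i.i.d. `Exp(1)` random variables. -/
theorem moments_of_exponential_product
    {Ω : Type*} [MeasurableSpace Ω] (μ : Measure Ω) [IsProbabilityMeasure μ]
    (ε : ℕ → Ω → ℝ) (hmeas : ∀ l, Measurable (ε l))
    (hindep : ProbabilityTheory.iIndepFun ε μ)
    (hdist : ∀ l, μ.map (ε l) = ProbabilityTheory.expMeasure 1)
    (s : ℕ) (hs : 1 ≤ s) :
    ∫ ω, (Real.exp (-(∑' l : ℕ, ε (l + 1) ω / ((l : ℝ) + 1) ^ 2))) ^ s ∂μ =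
      Real.pi * Real.sqrt s / Real.sinh (Real.pi * Real.sqrt s) := by
  set t : ℝ := -(s:ℝ) with htdef
  have hts : t ≤ -1 := by simp [htdef]; exact_mod_cast hs
  have ht1 : t < 1 := by linarith
  -- a.e. nonnegativity
  have hpos : ∀ᵐ ω ∂μ, ∀ l, 0 ≤ ε l ω := by
    rw [ae_all_iff]
    intro l
    have : μ {ω | ε l ω < 0} = 0 := by
      have h1 : {ω | ε l ω < 0} = ε l ⁻¹' (Iio 0) := rfl
      rw [h1, ← Measure.map_apply (hmeas l) measurableSet_Iio, hdist l, expMeasure, gammaMeasure,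
        withDensity_apply _ measurableSet_Iio]
      exact lintegral_gammaPDF_of_nonpos le_rfl
    filter_upwards [measure_eq_zero_iff_ae_notMem.mp this] with ω hω
    simpa using hω
  -- a.e. summability
  have hsummable : ∀ᵐ ω ∂μ, Summable (fun l : ℕ => ε (l + 1) ω / ((l : ℝ) + 1) ^ 2) := by
    have hfin : ∀ᵐ ω ∂μ,
        (∑' l : ℕ, ENNReal.ofReal (ε (l + 1) ω / ((l : ℝ) + 1) ^ 2)) < ∞ := by
      apply ae_lt_top (by fun_prop)
      rw [lintegral_tsum (fun l => by fun_prop)]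
      have hterm : ∀ l : ℕ, ∫⁻ ω, ENNReal.ofReal (ε (l + 1) ω / ((l : ℝ) + 1) ^ 2) ∂μ
          ≤ 4 * ENNReal.ofReal ((((l:ℝ)+1)^2)⁻¹) := by
        intro l
        have hc : (0:ℝ) < ((l:ℝ)+1)^2 := by positivity
        calc ∫⁻ ω, ENNReal.ofReal (ε (l + 1) ω / ((l : ℝ) + 1) ^ 2) ∂μ
            = ∫⁻ ω, ENNReal.ofReal (ε (l + 1) ω) * ENNReal.ofReal ((((l:ℝ)+1)^2)⁻¹) ∂μ := by
              congr 1 with ω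
              rw [div_eq_mul_inv, ENNReal.ofReal_mul' (by positivity)]
          _ = (∫⁻ ω, ENNReal.ofReal (ε (l + 1) ω) ∂μ) * ENNReal.ofReal ((((l:ℝ)+1)^2)⁻¹) :=
              lintegral_mul_const _ (by fun_prop)
          _ ≤ 4 * ENNReal.ofReal ((((l:ℝ)+1)^2)⁻¹) := by
              gcongr
              rw [← lintegral_map (by fun_prop) (hmeas (l+1)), hdist (l+1)]
              exact lintegral_id_expMeasure_le
      apply ne_of_lt
      calc (∑' l : ℕ, ∫⁻ ω, ENNReal.ofReal (ε (l + 1) ω / ((l : ℝ) + 1) ^ 2) ∂μ)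
          ≤ ∑' l : ℕ, 4 * ENNReal.ofReal ((((l:ℝ)+1)^2)⁻¹) := ENNReal.tsum_le_tsum hterm
        _ = 4 * ∑' l : ℕ, ENNReal.ofReal ((((l:ℝ)+1)^2)⁻¹) := ENNReal.tsum_mul_left
        _ < ∞ := by
            rw [← ENNReal.ofReal_tsum_of_nonneg (fun l => by positivity)]
            · exact ENNReal.mul_lt_top (by norm_num) ENNReal.ofReal_lt_top
            · have h2 : Summable (fun n : ℕ => ((n:ℝ)^2)⁻¹) := by
                simpa using Real.summable_one_div_nat_pow.mpr one_lt_two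
              have := (summable_nat_add_iff 1).mpr h2
              apply this.congr
              intro l
              push_cast
              ring_nf
    filter_upwards [hfin, hpos] with ω hω hωpos
    have h2 := ENNReal.summable_toReal hω.ne
    apply h2.congr
    intro l
    rw [ENNReal.toReal_ofReal (div_nonneg (hωpos (l+1)) (by positivity))]
  -- the scaled variables
  set X : ℕ → Ω → ℝ := fun i ω => ε i ω / (i:ℝ)^2 with hXdef
  have hXmeas : ∀ i, Measurable (X i) := fun i => (hmeas i).div_const _
  have hXindep : iIndepFun X μ :=
    hindep.comp (fun i x => x / (i:ℝ)^2) (fun i => measurable_id.div_const _)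
  have hmgf' : ∀ i : ℕ, 1 ≤ i → mgf (X i) μ t = (1 - t / (i:ℝ)^2)⁻¹ := by
    intro i hi
    have hti : t / (i:ℝ)^2 < 1 := by
      apply lt_of_le_of_lt (div_nonpos_of_nonpos_of_nonneg (by linarith) (by positivity))
      norm_num
    rw [mgf]
    calc μ[fun ω => Real.exp (t * X i ω)] = ∫ ω, Real.exp ((t / (i:ℝ)^2) * ε i ω) ∂μ := by
          congr 1 with ω
          simp only [hXdef]
          ring_nf
      _ = ∫ x, Real.exp ((t / (i:ℝ)^2) * x) ∂(μ.map (ε i)) :=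
          (integral_map (hmeas i).aemeasurable
            (Real.measurable_exp.comp (measurable_id'.const_mul _)).aestronglyMeasurable).symm
      _ = (1 - t / (i:ℝ)^2)⁻¹ := by rw [hdist i]; exact integral_exp_expMeasure hti
  have hprod : ∀ n : ℕ,
      ∫ ω, Real.exp (t * ∑ l ∈ Finset.range n, ε (l+1) ω / ((l:ℝ)+1)^2) ∂μ
        = ∏ l ∈ Finset.range n, ((1:ℝ) + (s:ℝ)/((l:ℝ)+1)^2)⁻¹ := by
    intro n
    have key := hXindep.mgf_sum (t := t) hXmeas
      ((Finset.range n).map ⟨Nat.succ, Nat.succ_injective⟩)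
    have hsum_eq : ∀ ω : Ω,
        t * (∑ i ∈ (Finset.range n).map ⟨Nat.succ, Nat.succ_injective⟩, X i) ω
          = t * ∑ l ∈ Finset.range n, ε (l+1) ω / ((l:ℝ)+1)^2 := by
      intro ω
      congr 1
      rw [Finset.sum_apply, Finset.sum_map]
      apply Finset.sum_congr rfl
      intro l _
      simp only [hXdef, Function.Embedding.coeFn_mk, Nat.succ_eq_add_one]
      push_cast
      ring
    rw [mgf] at key
    simp_rw [hsum_eq] at key
    rw [key, Finset.prod_map]
    apply Finset.prod_congr rfl
    intro l _
    rw [show ((⟨Nat.succ, Nat.succ_injective⟩ : ℕ ↪ ℕ) l) = l + 1 from rfl,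
      hmgf' (l+1) (Nat.le_add_left 1 l), htdef]
    push_cast
    ring_nf
  -- dominated convergence
  have hconv : Tendsto
      (fun n => ∫ ω, Real.exp (t * ∑ l ∈ Finset.range n, ε (l+1) ω / ((l:ℝ)+1)^2) ∂μ) atTop
      (𝓝 (∫ ω, Real.exp (t * ∑' l : ℕ, ε (l + 1) ω / ((l : ℝ) + 1) ^ 2) ∂μ)) := by
    apply tendsto_integral_of_dominated_convergence (bound := fun _ => (1:ℝ))
    · intro n
      exact (Real.measurable_exp.comp
        ((Finset.measurable_sum _ fun l _ => (hmeas (l+1)).div_const _).const_mul t)).aestronglyMeasurable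
    · exact integrable_const 1
    · intro n
      filter_upwards [hpos] with ω hω
      rw [Real.norm_eq_abs, Real.abs_exp, Real.exp_le_one_iff]
      apply mul_nonpos_of_nonpos_of_nonneg (by linarith)
      exact Finset.sum_nonneg fun l _ => div_nonneg (hω (l+1)) (by positivity)
    · filter_upwards [hsummable] with ω hω
      exact (Real.continuous_exp.tendsto _).comp (hω.hasSum.tendsto_sum_nat.const_mul t)
  have hLHS : ∀ ω : Ω,
      (Real.exp (-(∑' l : ℕ, ε (l + 1) ω / ((l : ℝ) + 1) ^ 2))) ^ s
        = Real.exp (t * ∑' l : ℕ, ε (l + 1) ω / ((l : ℝ) + 1) ^ 2) := by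
    intro ω
    rw [← Real.exp_nat_mul, htdef]
    congr 1
    ring
  simp_rw [hLHS]
  have hconv2 : Tendsto
      (fun n => ∏ l ∈ Finset.range n, ((1:ℝ) + (s:ℝ)/((l:ℝ)+1)^2)⁻¹) atTop
      (𝓝 (∫ ω, Real.exp (t * ∑' l : ℕ, ε (l + 1) ω / ((l : ℝ) + 1) ^ 2) ∂μ)) := by
    apply hconv.congr hprod
  exact tendsto_nhds_unique hconv2 (tendsto_prod_euler s hs)
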